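/- The unrooted disentangling number is at most one more than the rooted disentangling number: D(r) ≤ RD(r) + 1 for all r ∈ ℕ. -/

import Mathlib

/-- A rooted binary leaf-labelled tree on the label set `X`, encoded by its set of
clusters (sets of leaf labels below the vertices): a laminar family on `X`
containing `X` and all singletons, in which every cluster with at least two
elements is the disjoint union of exactly two proper subclusters. -/
def IsRBT (X : Finset ℕ) (C : Finset (Finset ℕ)) : Prop :=
  X ∈ C ∧ (∀ x ∈ X, {x} ∈ C) ∧ (∀ A ∈ C, A ⊆ X ∧ A.Nonempty) ∧
  (∀ A ∈ C, ∀ B ∈ C, A ∩ B = ∅ ∨ A ⊆ B ∨ B ⊆ A) ∧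
  (∀ A ∈ C, 2 ≤ A.card → ∃ B ∈ C, ∃ D ∈ C, Disjoint B D ∧ B ∪ D = A ∧ B ≠ A ∧ D ≠ A)

/-- The restriction `T|K` of a rooted leaf-labelled tree to a subset `K` of the
leaves, in cluster encoding: the nonempty intersections of clusters with `K`. -/
def restrictR (C : Finset (Finset ℕ)) (K : Finset ℕ) : Finset (Finset ℕ) :=
  (C.image (· ∩ K)).filter (·.Nonempty)

/-- `K` disentangles the multisets `S` and `T` of rooted trees if the multisets
of restrictions to `K` differ. -/
def RDisentangles (S T : Multiset (Finset (Finset ℕ))) (K : Finset ℕ) : Prop :=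
  S.map (fun C => restrictR C K) ≠ T.map (fun C => restrictR C K)

/-- The minimum cardinality of a disentangling set for two multisets of rooted
trees on the leaf set `X`. -/
noncomputable def rootedDisentDist (X : Finset ℕ) (S T : Multiset (Finset (Finset ℕ))) : ℕ :=
  sInf {m | ∃ K ⊆ X, K.card = m ∧ RDisentangles S T K}

/-- The rooted disentangling number `RD(r)`: the maximum over all `n` and all
pairs of distinct `r`-multisets of rooted binary leaf-labelled trees on `[n]`
of the minimum cardinality of a disentangling set. -/
noncomputable def RD (r : ℕ) : ℕ :=
  sSup {d | ∃ n : ℕ, ∃ S T : Multiset (Finset (Finset ℕ)),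
    Multiset.card S = r ∧ Multiset.card T = r ∧
    (∀ C ∈ S, IsRBT (Finset.range n) C) ∧ (∀ C ∈ T, IsRBT (Finset.range n) C) ∧
    S ≠ T ∧ d = rootedDisentDist (Finset.range n) S T}

/-- An unrooted binary leaf-labelled tree on the label set `X`, encoded by its
split system: the collection of sides of edge-induced bipartitions of `X`.
The collection is closed under complementation, pairwise compatible, contains
all trivial (singleton) splits, and has the cardinality `2·(2|X| - 3)` forced
by a binary (trivalent) tree. -/
def IsUBT (X : Finset ℕ) (S : Finset (Finset ℕ)) : Prop :=
  (∀ A ∈ S, A ⊆ X ∧ A.Nonempty ∧ (X \ A).Nonempty) ∧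
  (∀ A ∈ S, X \ A ∈ S) ∧
  (∀ x ∈ X, {x} ∈ S) ∧
  (∀ A ∈ S, ∀ B ∈ S, A ∩ B = ∅ ∨ A ⊆ B ∨ B ⊆ A ∨ X ⊆ A ∪ B) ∧
  S.card = 4 * X.card - 6

/-- The restriction `T|K` of an unrooted leaf-labelled tree to a subset `K` of
its leaves, in split encoding: intersections of split sides with `K` that give
a nonempty proper part of `K`. -/
def restrictU (S : Finset (Finset ℕ)) (K : Finset ℕ) : Finset (Finset ℕ) :=
  (S.image (· ∩ K)).filter (fun B => B.Nonempty ∧ B ≠ K)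

/-- `K` disentangles the multisets `S` and `T` of unrooted trees if the
multisets of restrictions to `K` differ. -/
def UDisentangles (S T : Multiset (Finset (Finset ℕ))) (K : Finset ℕ) : Prop :=
  S.map (fun A => restrictU A K) ≠ T.map (fun A => restrictU A K)

/-- The minimum cardinality of a disentangling set for two multisets of
unrooted trees on the leaf set `X`. -/
noncomputable def disentDist (X : Finset ℕ) (S T : Multiset (Finset (Finset ℕ))) : ℕ :=
  sInf {m | ∃ K ⊆ X, K.card = m ∧ UDisentangles S T K}

/-- The (unrooted) disentangling number `D(r)`: the maximum over all `n` and all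
pairs of distinct `r`-multisets of unrooted binary leaf-labelled trees on `[n]`
of the minimum cardinality of a disentangling set. -/
noncomputable def D (r : ℕ) : ℕ :=
  sSup {d | ∃ n : ℕ, ∃ S T : Multiset (Finset (Finset ℕ)),
    Multiset.card S = r ∧ Multiset.card T = r ∧
    (∀ A ∈ S, IsUBT (Finset.range n) A) ∧ (∀ A ∈ T, IsUBT (Finset.range n) A) ∧
    S ≠ T ∧ d = disentDist (Finset.range n) S T}


/-! ### Laminar family machinery -/

/-- `A` is a child of `P` in the family `L`: a maximal strict subset. -/
def IsChild (L : Finset (Finset ℕ)) (A P : Finset ℕ) : Prop :=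
  A ⊂ P ∧ ∀ B ∈ L, ¬(A ⊂ B ∧ B ⊂ P)

open scoped Classical in
/-- The parent of `A` in `L` (unique minimal strict superset), junk value `∅`. -/
noncomputable def parentOf (L : Finset (Finset ℕ)) (A : Finset ℕ) : Finset ℕ :=
  if h : ∃ P ∈ L, IsChild L A P then h.choose else ∅

/-- A laminar family on ground set `X` containing `X` and all singletons,
all of whose members are nonempty subsets of `X`. -/
structure LamFam (X : Finset ℕ) (L : Finset (Finset ℕ)) : Prop where
  top : X ∈ L
  sing : ∀ x ∈ X, {x} ∈ L
  sub : ∀ A ∈ L, A ⊆ X ∧ A.Nonempty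
  lam : ∀ A ∈ L, ∀ B ∈ L, A ∩ B = ∅ ∨ A ⊆ B ∨ B ⊆ A

namespace LamFam

variable {X : Finset ℕ} {L : Finset (Finset ℕ)} (h : LamFam X L)
include h

theorem child_exists {A : Finset ℕ} (hA : A ∈ L) (hAX : A ≠ X) :
    ∃ P ∈ L, IsChild L A P := by
  have hcont : (L.filter (fun B => A ⊂ B)).Nonempty := by
    refine ⟨X, Finset.mem_filter.2 ⟨h.top, ?_⟩⟩
    exact lt_of_le_of_ne (h.sub A hA).1 hAX
  obtain ⟨P, hP, hmin⟩ := Finset.exists_min_image _ Finset.card hcont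
  rw [Finset.mem_filter] at hP
  refine ⟨P, hP.1, hP.2, fun B hB hAB => ?_⟩
  have h1 : B ∈ L.filter (fun B => A ⊂ B) := Finset.mem_filter.2 ⟨hB, hAB.1⟩
  have := hmin B h1
  exact absurd (Finset.card_lt_card hAB.2) (by omega)

theorem child_unique {A P P' : Finset ℕ} (hA : A ∈ L) (hP : P ∈ L) (hP' : P' ∈ L)
    (h1 : IsChild L A P) (h2 : IsChild L A P') : P = P' := by
  obtain ⟨a, ha⟩ := (h.sub A hA).2
  have hnd : ¬ (P ∩ P' = ∅) := by
    intro hd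
    have : a ∈ P ∩ P' := Finset.mem_inter.2 ⟨h1.1.1 ha, h2.1.1 ha⟩
    simp [hd] at this
  rcases h.lam P hP P' hP' with hd | hss | hss
  · exact absurd hd hnd
  · rcases eq_or_lt_of_le hss with he | hlt
    · exact he
    · exact absurd ⟨h1.1, hlt⟩ (h2.2 P hP)
  · rcases eq_or_lt_of_le hss with he | hlt
    · exact he.symm
    · exact absurd ⟨h2.1, hlt⟩ (h1.2 P' hP')

theorem parentOf_spec {A : Finset ℕ} (hA : A ∈ L) (hAX : A ≠ X) :
    parentOf L A ∈ L ∧ IsChild L A (parentOf L A) := by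
  have he := h.child_exists hA hAX
  rw [parentOf]
  rw [dif_pos he]
  exact ⟨he.choose_spec.1, he.choose_spec.2⟩

theorem parentOf_eq {A P : Finset ℕ} (hA : A ∈ L) (hAX : A ≠ X) (hP : P ∈ L)
    (hc : IsChild L A P) : parentOf L A = P := by
  obtain ⟨h1, h2⟩ := h.parentOf_spec hA hAX
  exact h.child_unique hA h1 hP h2 hc

/-- The set of children of `P`. -/
noncomputable def fiber (L : Finset (Finset ℕ)) (X P : Finset ℕ) : Finset (Finset ℕ) :=
  (L.erase X).filter (fun A => parentOf L A = P)

omit h in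
theorem mem_fiber {A P : Finset ℕ} :
    A ∈ fiber L X P ↔ (A ∈ L ∧ A ≠ X ∧ parentOf L A = P) := by
  simp only [fiber, Finset.mem_filter, Finset.mem_erase]
  tauto

theorem child_of_mem_fiber {A P : Finset ℕ} (hA : A ∈ fiber L X P) :
    A ∈ L ∧ IsChild L A P := by
  rw [mem_fiber] at hA
  obtain ⟨h1, h2, h3⟩ := hA
  have := h.parentOf_spec h1 h2
  rw [h3] at this
  exact ⟨h1, this.2⟩

theorem mem_fiber_of_child {A P : Finset ℕ} (hA : A ∈ L) (hP : P ∈ L)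
    (hc : IsChild L A P) : A ∈ fiber L X P := by
  have hAX : A ≠ X := by
    intro he
    have := hc.1.2
    exact this (he ▸ (h.sub P hP).1)
  exact mem_fiber.2 ⟨hA, hAX, h.parentOf_eq hA hAX hP hc⟩

theorem card_erase_eq_sum : (L.erase X).card = ∑ P ∈ L, (fiber L X P).card := by
  apply Finset.card_eq_sum_card_fiberwise
  intro A hA
  rw [Finset.mem_coe, Finset.mem_erase] at hA
  exact (h.parentOf_spec hA.2 hA.1).1

theorem fiber_eq_empty {P : Finset ℕ} (hP : P.card ≤ 1) : fiber L X P = ∅ := by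
  rw [Finset.eq_empty_iff_forall_notMem]
  intro A hA
  obtain ⟨h1, h2⟩ := h.child_of_mem_fiber hA
  have hc := Finset.card_lt_card h2.1
  have := Finset.card_pos.2 (h.sub A h1).2
  omega

theorem exists_mem_fiber {P : Finset ℕ} (hP : P ∈ L) (hP2 : 2 ≤ P.card)
    {y : ℕ} (hy : y ∈ P) : ∃ A ∈ fiber L X P, y ∈ A := by
  have hyX : y ∈ X := (h.sub P hP).1 hy
  have hM : ({y} : Finset ℕ) ∈ L.filter (fun A => y ∈ A ∧ A ⊂ P) := by
    refine Finset.mem_filter.2 ⟨h.sing y hyX, Finset.mem_singleton_self y, ?_⟩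
    refine Finset.ssubset_iff_of_subset (Finset.singleton_subset_iff.2 hy) |>.2 ?_
    by_contra hne
    push_neg at hne
    have : P ⊆ {y} := fun z hz => by
      by_contra hzy
      exact hzy (hne z hz)
    have := Finset.card_le_card this
    simp at this; omega
  obtain ⟨A, hA, hmax⟩ := Finset.exists_max_image _ Finset.card ⟨_, hM⟩
  rw [Finset.mem_filter] at hA
  obtain ⟨hAL, hyA, hAP⟩ := hA
  refine ⟨A, h.mem_fiber_of_child hAL hP ⟨hAP, fun B hB hAB => ?_⟩, hyA⟩
  have : B ∈ L.filter (fun A => y ∈ A ∧ A ⊂ P) :=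
    Finset.mem_filter.2 ⟨hB, hAB.1.1 hyA, hAB.2⟩
  have := hmax B this
  exact absurd (Finset.card_lt_card hAB.1) (by omega)

theorem two_le_card_fiber {P : Finset ℕ} (hP : P ∈ L) (hP2 : 2 ≤ P.card) :
    2 ≤ (fiber L X P).card := by
  obtain ⟨y, hy⟩ := (h.sub P hP).2
  obtain ⟨A, hA, hyA⟩ := h.exists_mem_fiber hP hP2 hy
  have hAP := (h.child_of_mem_fiber hA).2.1
  obtain ⟨z, hzP, hzA⟩ := Finset.exists_of_ssubset hAP
  obtain ⟨A', hA', hzA'⟩ := h.exists_mem_fiber hP hP2 hzP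
  refine Finset.one_lt_card.2 ⟨A, hA, A', hA', ?_⟩
  intro he
  exact hzA (he ▸ hzA')

theorem fiber_cover {P : Finset ℕ} (hP : P ∈ L) (hP2 : 2 ≤ P.card) :
    P ⊆ (fiber L X P).biUnion id := by
  intro y hy
  obtain ⟨A, hA, hyA⟩ := h.exists_mem_fiber hP hP2 hy
  exact Finset.mem_biUnion.2 ⟨A, hA, hyA⟩

theorem split_of_card_fiber_eq_two {P : Finset ℕ} (hP : P ∈ L) (hP2 : 2 ≤ P.card)
    (hc : (fiber L X P).card = 2) :
    ∃ B ∈ L, ∃ D ∈ L, Disjoint B D ∧ B ∪ D = P ∧ B ≠ P ∧ D ≠ P := by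
  obtain ⟨B, D, hBD, hf⟩ := Finset.card_eq_two.1 hc
  have hBf : B ∈ fiber L X P := by rw [hf]; simp
  have hDf : D ∈ fiber L X P := by rw [hf]; simp
  obtain ⟨hBL, hBc⟩ := h.child_of_mem_fiber hBf
  obtain ⟨hDL, hDc⟩ := h.child_of_mem_fiber hDf
  have hdisj : Disjoint B D := by
    rcases h.lam B hBL D hDL with hd | hss | hss
    · exact Finset.disjoint_iff_inter_eq_empty.2 hd
    · rcases eq_or_lt_of_le hss with he | hlt
      · exact absurd he hBD
      · exact absurd ⟨hlt, hDc.1⟩ (hBc.2 D hDL)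
    · rcases eq_or_lt_of_le hss with he | hlt
      · exact absurd he.symm hBD
      · exact absurd ⟨hlt, hBc.1⟩ (hDc.2 B hBL)
  refine ⟨B, hBL, D, hDL, hdisj, ?_, hBc.1.ne, hDc.1.ne⟩
  apply Finset.Subset.antisymm
  · exact Finset.union_subset hBc.1.1 hDc.1.1
  · intro y hy
    have := h.fiber_cover hP hP2 hy
    rw [hf] at this
    simp only [Finset.mem_biUnion, Finset.mem_insert, Finset.mem_singleton, id] at this
    obtain ⟨A, hA | hA, hyA⟩ := this <;> subst hA <;> simp [Finset.mem_union, hyA]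

theorem card_fiber_eq_two_of_split {P B D : Finset ℕ} (hP : P ∈ L) (hP2 : 2 ≤ P.card)
    (hBL : B ∈ L) (hDL : D ∈ L) (hdisj : Disjoint B D) (hun : B ∪ D = P)
    (hBne : B ≠ P) (hDne : D ≠ P) : (fiber L X P).card = 2 := by
  have hBP : B ⊂ P := lt_of_le_of_ne (hun ▸ Finset.subset_union_left) hBne
  have hDP : D ⊂ P := lt_of_le_of_ne (hun ▸ Finset.subset_union_right) hDne
  have hsub : fiber L X P ⊆ {B, D} := by
    intro A hA
    obtain ⟨hAL, hAc⟩ := h.child_of_mem_fiber hA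
    have hAsub : A ⊆ B ∨ A ⊆ D := by
      have hAP : A ⊆ P := hAc.1.1
      rcases h.lam A hAL B hBL with hd | hss | hss
      · right
        intro a ha
        have : a ∈ B ∪ D := hun ▸ hAP ha
        rcases Finset.mem_union.1 this with h' | h'
        · exact absurd (Finset.mem_inter.2 ⟨ha, h'⟩) (by simp [hd])
        · exact h'
      · exact Or.inl hss
      · rcases h.lam A hAL D hDL with hd' | hss' | hss'
        · left
          intro a ha
          have : a ∈ B ∪ D := hun ▸ hAP ha
          rcases Finset.mem_union.1 this with h' | h'
          · exact h'
          · exact absurd (Finset.mem_inter.2 ⟨ha, h'⟩) (by simp [hd'])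
        · exact Or.inr hss'
        · exfalso
          have : P ⊆ A := hun ▸ Finset.union_subset hss hss'
          exact hAc.1.2 this
    have key : ∀ C, C ∈ L → C ⊂ P → A ⊆ C → A = C := by
      intro C hCL hCP hAC
      rcases eq_or_lt_of_le hAC with he | hlt
      · exact he
      · exact absurd ⟨hlt, hCP⟩ (hAc.2 C hCL)
    rcases hAsub with h' | h'
    · simp [key B hBL hBP h']
    · simp [key D hDL hDP h']
  have h2 := h.two_le_card_fiber hP hP2
  have := Finset.card_le_card hsub
  have hcard : ({B, D} : Finset (Finset ℕ)).card ≤ 2 := Finset.card_insert_le _ _ |>.trans (by simp)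
  omega

theorem filter_singleton_card : (L.filter (fun P => P.card = 1)).card = X.card := by
  have : L.filter (fun P => P.card = 1) = X.image (fun y => ({y} : Finset ℕ)) := by
    apply Finset.Subset.antisymm
    · intro P hP
      rw [Finset.mem_filter] at hP
      obtain ⟨y, hy⟩ := Finset.card_eq_one.1 hP.2
      subst hy
      exact Finset.mem_image.2 ⟨y, (h.sub _ hP.1).1 (Finset.mem_singleton_self y), rfl⟩
    · intro P hP
      obtain ⟨y, hy, rfl⟩ := Finset.mem_image.1 hP
      exact Finset.mem_filter.2 ⟨h.sing y hy, by simp⟩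
  rw [this, Finset.card_image_of_injective _ (fun a b hab => by simpa using hab)]

theorem card_split :
    L.card = X.card + (L.filter (fun P => 2 ≤ P.card)).card := by
  have := Finset.card_filter_add_card_filter_not (s := L)
    (p := fun P => P.card = 1)
  rw [h.filter_singleton_card] at this
  have he : L.filter (fun P => ¬ P.card = 1) = L.filter (fun P => 2 ≤ P.card) := by
    apply Finset.filter_congr
    intro P hP
    have := Finset.card_pos.2 (h.sub P hP).2
    omega
  rw [he] at this
  omega

theorem sum_fiber_ge :
    2 * (L.filter (fun P => 2 ≤ P.card)).card ≤ L.card - 1 := by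
  have h1 := h.card_erase_eq_sum
  rw [Finset.card_erase_of_mem h.top] at h1
  rw [h1]
  calc 2 * (L.filter (fun P => 2 ≤ P.card)).card
      = ∑ P ∈ L.filter (fun P => 2 ≤ P.card), 2 := by
        rw [Finset.sum_const, smul_eq_mul]; ring
    _ ≤ ∑ P ∈ L.filter (fun P => 2 ≤ P.card), (fiber L X P).card := by
        apply Finset.sum_le_sum
        intro P hP
        rw [Finset.mem_filter] at hP
        exact h.two_le_card_fiber hP.1 hP.2
    _ ≤ ∑ P ∈ L, (fiber L X P).card := by
        apply Finset.sum_le_sum_of_subset (Finset.filter_subset _ _)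

/-- Lemma A: in a laminar family of maximal size `2|X| - 1`, every member of size
at least two splits into exactly two children. -/
theorem split_of_card_eq (hcard : L.card = 2 * X.card - 1)
    {B : Finset ℕ} (hB : B ∈ L) (hB2 : 2 ≤ B.card) :
    ∃ C ∈ L, ∃ D ∈ L, Disjoint C D ∧ C ∪ D = B ∧ C ≠ B ∧ D ≠ B := by
  have hX1 : 1 ≤ X.card := Finset.card_pos.2 (h.sub X h.top).2
  have hsplit := h.card_split
  have hge := h.sum_fiber_ge
  -- number of non-singleton members
  set k := (L.filter (fun P => 2 ≤ P.card)).card with hk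
  have hkval : k = X.card - 1 := by omega
  -- the sum equals exactly 2k, so every fiber of a non-singleton has card exactly 2
  apply h.split_of_card_fiber_eq_two hB hB2
  by_contra hne
  have h2 := h.two_le_card_fiber hB hB2
  have h3 : 3 ≤ (fiber L X B).card := by omega
  have h1 := h.card_erase_eq_sum
  rw [Finset.card_erase_of_mem h.top] at h1
  have hstrict : 2 * k + 1 ≤ ∑ P ∈ L, (fiber L X P).card := by
    have hBf : B ∈ L.filter (fun P => 2 ≤ P.card) := Finset.mem_filter.2 ⟨hB, hB2⟩
    calc 2 * k + 1 = (∑ _P ∈ L.filter (fun P => 2 ≤ P.card), 2) + 1 := by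
          rw [Finset.sum_const, smul_eq_mul]; ring
      _ ≤ ∑ P ∈ L.filter (fun P => 2 ≤ P.card), (fiber L X P).card := by
          rw [← Finset.sum_erase_add _ _ hBf, ← Finset.sum_erase_add _ (fun P => (fiber L X P).card) hBf]
          have : ∑ P ∈ (L.filter (fun P => 2 ≤ P.card)).erase B, 2
              ≤ ∑ P ∈ (L.filter (fun P => 2 ≤ P.card)).erase B, (fiber L X P).card := by
            apply Finset.sum_le_sum
            intro P hP
            rw [Finset.mem_erase, Finset.mem_filter] at hP
            exact h.two_le_card_fiber hP.2.1 hP.2.2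
          omega
      _ ≤ ∑ P ∈ L, (fiber L X P).card :=
          Finset.sum_le_sum_of_subset (Finset.filter_subset _ _)
  omega

/-- Lemma B: a laminar family in which every member of size at least two splits
into two has cardinality exactly `2|X| - 1`. -/
theorem card_eq_of_split
    (hsp : ∀ A ∈ L, 2 ≤ A.card → ∃ B ∈ L, ∃ D ∈ L, Disjoint B D ∧ B ∪ D = A ∧ B ≠ A ∧ D ≠ A) :
    L.card = 2 * X.card - 1 := by
  have hX1 : 1 ≤ X.card := Finset.card_pos.2 (h.sub X h.top).2
  have hsplit := h.card_split
  have h1 := h.card_erase_eq_sum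
  rw [Finset.card_erase_of_mem h.top] at h1
  have hsum : ∑ P ∈ L, (fiber L X P).card = 2 * (L.filter (fun P => 2 ≤ P.card)).card := by
    rw [← Finset.sum_filter_add_sum_filter_not L (fun P => 2 ≤ P.card)]
    have e1 : ∑ P ∈ L.filter (fun P => 2 ≤ P.card), (fiber L X P).card
        = ∑ _P ∈ L.filter (fun P => 2 ≤ P.card), 2 := by
      apply Finset.sum_congr rfl
      intro P hP
      rw [Finset.mem_filter] at hP
      obtain ⟨C, hC, Dd, hD, h5⟩ := hsp P hP.1 hP.2
      exact h.card_fiber_eq_two_of_split hP.1 hP.2 hC hD h5.1 h5.2.1 h5.2.2.1 h5.2.2.2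
    have e2 : ∑ P ∈ L.filter (fun P => ¬ 2 ≤ P.card), (fiber L X P).card = 0 := by
      apply Finset.sum_eq_zero
      intro P hP
      rw [Finset.mem_filter] at hP
      rw [h.fiber_eq_empty (by omega)]
      simp
    rw [e1, e2, Finset.sum_const, smul_eq_mul]
    ring
  have hL1 : 1 ≤ L.card := Finset.card_pos.2 ⟨X, h.top⟩
  omega

end LamFam



/-! ### Rooting and unrooting -/

/-- Root an unrooted tree on `range (m+1)` at the leaf `m`: keep the sides avoiding `m`. -/
def rootify (m : ℕ) (A : Finset (Finset ℕ)) : Finset (Finset ℕ) :=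
  A.filter (fun B => m ∉ B)

/-- Unroot a rooted tree on `range n` by attaching a new leaf `n`:
add the complements of all clusters. -/
def unrootify (n : ℕ) (C : Finset (Finset ℕ)) : Finset (Finset ℕ) :=
  C ∪ C.image (Finset.range (n+1) \ ·)


theorem sdiff_sdiff_cancel (X B : Finset ℕ) (h : B ⊆ X) : X \ (X \ B) = B := by
  ext z
  simp only [Finset.mem_sdiff]
  constructor
  · rintro ⟨h1, h2⟩
    by_contra hz
    exact h2 ⟨h1, hz⟩
  · intro hz
    exact ⟨h hz, fun h' => h'.2 hz⟩

theorem range_succ_sdiff (m : ℕ) : Finset.range (m+1) \ {m} = Finset.range m := by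
  ext z
  simp only [Finset.mem_sdiff, Finset.mem_range, Finset.mem_singleton]
  omega

theorem isUBT_one_le {m : ℕ} {A : Finset (Finset ℕ)}
    (h : IsUBT (Finset.range (m+1)) A) : 1 ≤ m := by
  by_contra hm
  have hm0 : m = 0 := by omega
  subst hm0
  have h0 : ({0} : Finset ℕ) ∈ A := h.2.2.1 0 (by simp)
  have := (h.1 _ h0).2.2
  rw [show Finset.range 1 \ {0} = ∅ by decide] at this
  exact Finset.not_nonempty_empty this

theorem lamFam_rootify {m : ℕ} {A : Finset (Finset ℕ)}
    (h : IsUBT (Finset.range (m+1)) A) :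
    LamFam (Finset.range m) (rootify m A) := by
  obtain ⟨hsub, hcompl, hsing, hcompat, hcard⟩ := h
  constructor
  · -- top
    have h1 : ({m} : Finset ℕ) ∈ A := hsing m (by simp [Finset.mem_range])
    have h2 : Finset.range (m+1) \ {m} ∈ A := hcompl _ h1
    rw [range_succ_sdiff] at h2
    refine Finset.mem_filter.2 ⟨h2, by simp [Finset.mem_range]⟩
  · intro x hx
    rw [Finset.mem_range] at hx
    refine Finset.mem_filter.2 ⟨hsing x (by simp [Finset.mem_range]; omega), ?_⟩
    simp
    omega
  · intro B hB
    rw [rootify, Finset.mem_filter] at hB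
    obtain ⟨hB1, hB2⟩ := hB
    refine ⟨?_, (hsub B hB1).2.1⟩
    intro z hz
    have hz1 := (hsub B hB1).1 hz
    rw [Finset.mem_range] at hz1 ⊢
    have : z ≠ m := fun he => hB2 (he ▸ hz)
    omega
  · intro B hB B' hB'
    rw [rootify, Finset.mem_filter] at hB hB'
    rcases hcompat B hB.1 B' hB'.1 with h' | h' | h' | h'
    · exact Or.inl h'
    · exact Or.inr (Or.inl h')
    · exact Or.inr (Or.inr h')
    · exfalso
      have : m ∈ B ∪ B' := h' (by simp [Finset.mem_range])
      rcases Finset.mem_union.1 this with h'' | h''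
      · exact hB.2 h''
      · exact hB'.2 h''

theorem card_rootify {m : ℕ} {A : Finset (Finset ℕ)}
    (h : IsUBT (Finset.range (m+1)) A) :
    (rootify m A).card = 2 * m - 1 := by
  have hm := isUBT_one_le h
  obtain ⟨hsub, hcompl, hsing, hcompat, hcard⟩ := h
  have himg : A.filter (fun B => m ∈ B) = (A.filter (fun B => m ∉ B)).image
      (fun B => Finset.range (m+1) \ B) := by
    apply Finset.Subset.antisymm
    · intro B hB
      rw [Finset.mem_filter] at hB
      refine Finset.mem_image.2 ⟨Finset.range (m+1) \ B, Finset.mem_filter.2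
        ⟨hcompl _ hB.1, by simp [hB.2]⟩, ?_⟩
      exact sdiff_sdiff_cancel _ _ (hsub B hB.1).1
    · intro B hB
      obtain ⟨E, hE, rfl⟩ := Finset.mem_image.1 hB
      rw [Finset.mem_filter] at hE
      refine Finset.mem_filter.2 ⟨hcompl _ hE.1, ?_⟩
      simp only [Finset.mem_sdiff, Finset.mem_range]
      exact ⟨by omega, hE.2⟩
  have hinj : Set.InjOn (fun B => Finset.range (m+1) \ B) (A.filter (fun B => m ∉ B)) := by
    intro B hB B' hB' he
    simp only [Finset.coe_filter, Set.mem_setOf_eq] at hB hB'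
    have h1 : Finset.range (m+1) \ (Finset.range (m+1) \ B) = B :=
      sdiff_sdiff_cancel _ _ (hsub B hB.1).1
    have h2 : Finset.range (m+1) \ (Finset.range (m+1) \ B') = B' :=
      sdiff_sdiff_cancel _ _ (hsub B' hB'.1).1
    have he' : Finset.range (m+1) \ B = Finset.range (m+1) \ B' := he
    rw [← h1, ← h2, he']
  have hcount := Finset.card_filter_add_card_filter_not (s := A)
    (p := fun B => m ∈ B)
  have himgcard : (A.filter (fun B => m ∈ B)).card = (A.filter (fun B => m ∉ B)).card := by
    rw [himg, Finset.card_image_of_injOn hinj]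
  rw [Finset.card_range] at hcard
  have : (A.filter (fun B => ¬ m ∈ B)).card = (A.filter (fun B => m ∉ B)).card := rfl
  rw [this] at hcount
  rw [rootify]
  omega

theorem isRBT_rootify {m : ℕ} {A : Finset (Finset ℕ)}
    (h : IsUBT (Finset.range (m+1)) A) :
    IsRBT (Finset.range m) (rootify m A) := by
  have hl := lamFam_rootify h
  have hc : (rootify m A).card = 2 * (Finset.range m).card - 1 := by
    rw [Finset.card_range]; exact card_rootify h
  exact ⟨hl.top, hl.sing, hl.sub, hl.lam, fun B hB hB2 => hl.split_of_card_eq hc hB hB2⟩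

theorem rootify_leftinv {m : ℕ} {A : Finset (Finset ℕ)}
    (h : IsUBT (Finset.range (m+1)) A) :
    unrootify m (rootify m A) = A := by
  obtain ⟨hsub, hcompl, hsing, hcompat, hcard⟩ := h
  rw [unrootify, rootify]
  apply Finset.Subset.antisymm
  · intro B hB
    rcases Finset.mem_union.1 hB with h' | h'
    · exact (Finset.mem_filter.1 h').1
    · obtain ⟨E, hE, rfl⟩ := Finset.mem_image.1 h'
      exact hcompl _ (Finset.mem_filter.1 hE).1
  · intro B hB
    by_cases hm : m ∈ B
    · refine Finset.mem_union.2 (Or.inr (Finset.mem_image.2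
        ⟨Finset.range (m+1) \ B, Finset.mem_filter.2 ⟨hcompl _ hB, by simp [hm]⟩, ?_⟩))
      exact sdiff_sdiff_cancel _ _ (hsub B hB).1
    · exact Finset.mem_union.2 (Or.inl (Finset.mem_filter.2 ⟨hB, hm⟩))


theorem lamFam_of_isRBT {X : Finset ℕ} {C : Finset (Finset ℕ)} (h : IsRBT X C) :
    LamFam X C := ⟨h.1, h.2.1, h.2.2.1, h.2.2.2.1⟩

theorem isRBT_one_le {n : ℕ} {C : Finset (Finset ℕ)} (h : IsRBT (Finset.range n) C) :
    1 ≤ n := by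
  have := (h.2.2.1 _ h.1).2
  rw [Finset.nonempty_range_iff] at this
  omega

theorem range_succ_sdiff_range (n : ℕ) : Finset.range (n+1) \ Finset.range n = {n} := by
  ext z
  simp only [Finset.mem_sdiff, Finset.mem_range, Finset.mem_singleton]
  omega

theorem card_unrootify {n : ℕ} {C : Finset (Finset ℕ)} (h : IsRBT (Finset.range n) C) :
    (unrootify n C).card = 2 * C.card := by
  have hsubX : ∀ B ∈ C, B ⊆ Finset.range (n+1) := by
    intro B hB
    refine (h.2.2.1 B hB).1.trans ?_
    intro z hz
    rw [Finset.mem_range] at hz ⊢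
    omega
  have hn : ∀ B ∈ C, n ∉ B := by
    intro B hB hn'
    have := (h.2.2.1 B hB).1 hn'
    simp [Finset.mem_range] at this
  have hdisj : Disjoint C (C.image (fun B => Finset.range (n+1) \ B)) := by
    rw [Finset.disjoint_left]
    intro B hB hB'
    obtain ⟨E, hE, hEB⟩ := Finset.mem_image.1 hB'
    apply hn B hB
    rw [← hEB, Finset.mem_sdiff]
    exact ⟨by simp, hn E hE⟩
  have hinj : Set.InjOn (fun B => Finset.range (n+1) \ B) ↑C := by
    intro B hB B' hB' he
    have he' : Finset.range (n+1) \ B = Finset.range (n+1) \ B' := he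
    rw [← sdiff_sdiff_cancel _ B (hsubX B (Finset.mem_coe.1 hB)),
      ← sdiff_sdiff_cancel _ B' (hsubX B' (Finset.mem_coe.1 hB')), he']
  rw [unrootify, Finset.card_union_of_disjoint hdisj, Finset.card_image_of_injOn hinj]
  omega

theorem isUBT_unrootify {n : ℕ} {C : Finset (Finset ℕ)} (h : IsRBT (Finset.range n) C) :
    IsUBT (Finset.range (n+1)) (unrootify n C) := by
  have hn1 := isRBT_one_le h
  obtain ⟨htop, hsing, hsub, hlam, hsplit⟩ := h
  have hsubX : ∀ B ∈ C, B ⊆ Finset.range (n+1) := by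
    intro B hB
    refine (hsub B hB).1.trans ?_
    intro z hz
    rw [Finset.mem_range] at hz ⊢
    omega
  have hnB : ∀ B ∈ C, n ∉ B := by
    intro B hB hn'
    have := (hsub B hB).1 hn'
    simp [Finset.mem_range] at this
  have hmem : ∀ G ∈ unrootify n C, G ∈ C ∨ ∃ E ∈ C, G = Finset.range (n+1) \ E := by
    intro G hG
    rcases Finset.mem_union.1 hG with h' | h'
    · exact Or.inl h'
    · obtain ⟨E, hE, rfl⟩ := Finset.mem_image.1 h'
      exact Or.inr ⟨E, hE, rfl⟩
  refine ⟨?_, ?_, ?_, ?_, ?_⟩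
  · intro B hB
    rcases hmem B hB with h' | ⟨E, hE, rfl⟩
    · refine ⟨hsubX B h', (hsub B h').2, ⟨n, ?_⟩⟩
      rw [Finset.mem_sdiff]
      exact ⟨by simp, hnB B h'⟩
    · refine ⟨Finset.sdiff_subset, ?_, ?_⟩
      · exact ⟨n, by rw [Finset.mem_sdiff]; exact ⟨by simp, hnB E hE⟩⟩
      · rw [sdiff_sdiff_cancel _ E (hsubX E hE)]
        exact (hsub E hE).2
  · intro B hB
    rcases hmem B hB with h' | ⟨E, hE, rfl⟩
    · exact Finset.mem_union.2 (Or.inr (Finset.mem_image.2 ⟨B, h', rfl⟩))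
    · rw [sdiff_sdiff_cancel _ E (hsubX E hE)]
      exact Finset.mem_union.2 (Or.inl hE)
  · intro x hx
    rw [Finset.mem_range] at hx
    by_cases hxn : x = n
    · refine Finset.mem_union.2 (Or.inr (Finset.mem_image.2 ⟨Finset.range n, htop, ?_⟩))
      rw [hxn]
      exact range_succ_sdiff_range n
    · exact Finset.mem_union.2 (Or.inl (hsing x (by rw [Finset.mem_range]; omega)))
  · intro B hB B' hB'
    rcases hmem B hB with h1 | ⟨E, hE, rfl⟩ <;> rcases hmem B' hB' with h2 | ⟨F, hF, rfl⟩
    · rcases hlam B h1 B' h2 with h' | h' | h'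
      · exact Or.inl h'
      · exact Or.inr (Or.inl h')
      · exact Or.inr (Or.inr (Or.inl h'))
    · rcases hlam B h1 F hF with h' | h' | h'
      · refine Or.inr (Or.inl ?_)
        intro z hz
        rw [Finset.mem_sdiff]
        refine ⟨hsubX B h1 hz, fun hzF => ?_⟩
        have : z ∈ B ∩ F := Finset.mem_inter.2 ⟨hz, hzF⟩
        simp [h'] at this
      · refine Or.inl ?_
        rw [Finset.eq_empty_iff_forall_notMem]
        intro z hz
        rw [Finset.mem_inter, Finset.mem_sdiff] at hz
        exact hz.2.2 (h' hz.1)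
      · refine Or.inr (Or.inr (Or.inr ?_))
        intro z hz
        rw [Finset.mem_union, Finset.mem_sdiff]
        by_cases hzF : z ∈ F
        · exact Or.inl (h' hzF)
        · exact Or.inr ⟨hz, hzF⟩
    · rcases hlam E hE B' h2 with h' | h' | h'
      · refine Or.inr (Or.inr (Or.inl ?_))
        intro z hz
        rw [Finset.mem_sdiff]
        refine ⟨hsubX B' h2 hz, fun hzE => ?_⟩
        have : z ∈ E ∩ B' := Finset.mem_inter.2 ⟨hzE, hz⟩
        simp [h'] at this
      · refine Or.inr (Or.inr (Or.inr ?_))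
        intro z hz
        rw [Finset.mem_union, Finset.mem_sdiff]
        by_cases hzE : z ∈ E
        · exact Or.inr (h' hzE)
        · exact Or.inl ⟨hz, hzE⟩
      · refine Or.inl ?_
        rw [Finset.eq_empty_iff_forall_notMem]
        intro z hz
        rw [Finset.mem_inter, Finset.mem_sdiff] at hz
        exact hz.1.2 (h' hz.2)
    · rcases hlam E hE F hF with h' | h' | h'
      · refine Or.inr (Or.inr (Or.inr ?_))
        intro z hz
        rw [Finset.mem_union, Finset.mem_sdiff, Finset.mem_sdiff]
        by_cases hzE : z ∈ E
        · refine Or.inr ⟨hz, fun hzF => ?_⟩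
          have : z ∈ E ∩ F := Finset.mem_inter.2 ⟨hzE, hzF⟩
          simp [h'] at this
        · exact Or.inl ⟨hz, hzE⟩
      · refine Or.inr (Or.inr (Or.inl ?_))
        intro z hz
        rw [Finset.mem_sdiff] at hz ⊢
        exact ⟨hz.1, fun hzE => hz.2 (h' hzE)⟩
      · refine Or.inr (Or.inl ?_)
        intro z hz
        rw [Finset.mem_sdiff] at hz ⊢
        exact ⟨hz.1, fun hzF => hz.2 (h' hzF)⟩
  · have hCcard : C.card = 2 * n - 1 := by
      have := (lamFam_of_isRBT ⟨htop, hsing, hsub, hlam, hsplit⟩).card_eq_of_split hsplit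
      rwa [Finset.card_range] at this
    rw [card_unrootify ⟨htop, hsing, hsub, hlam, hsplit⟩, hCcard, Finset.card_range]
    omega

theorem unrootify_leftinv {n : ℕ} {C : Finset (Finset ℕ)} (h : IsRBT (Finset.range n) C) :
    rootify n (unrootify n C) = C := by
  have hnB : ∀ B ∈ C, n ∉ B := by
    intro B hB hn'
    have := (h.2.2.1 B hB).1 hn'
    simp [Finset.mem_range] at this
  rw [rootify, unrootify]
  apply Finset.Subset.antisymm
  · intro B hB
    rw [Finset.mem_filter] at hB
    rcases Finset.mem_union.1 hB.1 with h' | h'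
    · exact h'
    · obtain ⟨E, hE, rfl⟩ := Finset.mem_image.1 h'
      exfalso
      apply hB.2
      rw [Finset.mem_sdiff]
      exact ⟨by simp, hnB E hE⟩
  · intro B hB
    exact Finset.mem_filter.2 ⟨Finset.mem_union.2 (Or.inl hB), hnB B hB⟩


/-! ### Restriction identities -/

theorem inter_insert_of_not_mem {B K : Finset ℕ} {x : ℕ} (hx : x ∉ B) :
    B ∩ insert x K = B ∩ K := by
  ext z
  simp only [Finset.mem_inter, Finset.mem_insert]
  constructor
  · rintro ⟨h1, rfl | h2⟩
    · exact absurd h1 hx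
    · exact ⟨h1, h2⟩
  · rintro ⟨h1, h2⟩
    exact ⟨h1, Or.inr h2⟩

theorem restrictR_rootify_eq (A : Finset (Finset ℕ)) (x : ℕ) (K : Finset ℕ) (hx : x ∉ K) :
    restrictR (rootify x A) K = (restrictU A (insert x K)).filter (fun E => x ∉ E) := by
  ext E
  simp only [restrictR, restrictU, rootify, Finset.mem_filter, Finset.mem_image]
  constructor
  · rintro ⟨⟨B, hB, rfl⟩, hne⟩
    have hxB : x ∉ B := hB.2
    have hxE : x ∉ B ∩ K := fun h' => hxB (Finset.mem_inter.1 h').1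
    refine ⟨⟨⟨B, hB.1, inter_insert_of_not_mem hxB⟩, hne, ?_⟩, hxE⟩
    intro heq
    exact hxE (heq ▸ Finset.mem_insert_self x K)
  · rintro ⟨⟨⟨B, hBA, rfl⟩, hne, hneq⟩, hxE⟩
    have hxB : x ∉ B := fun h' =>
      hxE (Finset.mem_inter.2 ⟨h', Finset.mem_insert_self x K⟩)
    exact ⟨⟨B, ⟨hBA, hxB⟩, (inter_insert_of_not_mem hxB).symm⟩, hne⟩

theorem inter_erase_of_not_mem {E K : Finset ℕ} {n : ℕ} (hn : n ∉ E) :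
    E ∩ K.erase n = E ∩ K := by
  ext z
  simp only [Finset.mem_inter, Finset.mem_erase]
  constructor
  · rintro ⟨h1, _, h2⟩
    exact ⟨h1, h2⟩
  · rintro ⟨h1, h2⟩
    exact ⟨h1, fun he => hn (he ▸ h1), h2⟩

theorem sdiff_inter_self_right (K E : Finset ℕ) : K \ (E ∩ K) = K \ E := by
  ext z
  simp only [Finset.mem_sdiff, Finset.mem_inter]
  tauto

theorem restrictU_unrootify_eq (C : Finset (Finset ℕ)) (n : ℕ) (K : Finset ℕ)
    (hK : K ⊆ Finset.range (n+1)) (hC : ∀ E ∈ C, n ∉ E) :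
    restrictU (unrootify n C) K =
      ((restrictR C (K.erase n)) ∪ (restrictR C (K.erase n)).image (fun q => K \ q)).filter
        (fun B => B.Nonempty ∧ B ≠ K) := by
  have hint : ∀ E ∈ C, E ∩ K.erase n = E ∩ K := fun E hE => inter_erase_of_not_mem (hC E hE)
  have hcompl_int : ∀ E ∈ C, (Finset.range (n+1) \ E) ∩ K = K \ (E ∩ K.erase n) := by
    intro E hE
    rw [hint E hE, sdiff_inter_self_right]
    ext z
    simp only [Finset.mem_inter, Finset.mem_sdiff]
    constructor
    · rintro ⟨⟨h1, h2⟩, h3⟩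
      exact ⟨h3, h2⟩
    · rintro ⟨h1, h2⟩
      exact ⟨⟨hK h1, h2⟩, h1⟩
  ext E'
  simp only [restrictU, Finset.mem_filter, Finset.mem_image, Finset.mem_union]
  constructor
  · rintro ⟨⟨G, hG, rfl⟩, hne, hneK⟩
    refine ⟨?_, hne, hneK⟩
    rcases Finset.mem_union.1 hG with h' | h'
    · left
      rw [restrictR]
      exact Finset.mem_filter.2 ⟨Finset.mem_image.2 ⟨G, h', hint G h'⟩, hne⟩
    · obtain ⟨E, hE, rfl⟩ := Finset.mem_image.1 h'
      right
      have hq : E ∩ K.erase n ≠ ∅ := by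
        intro hq0
        apply hneK
        rw [hcompl_int E hE, hq0, Finset.sdiff_empty]
      refine ⟨E ∩ K.erase n, ?_, ?_⟩
      · rw [restrictR]
        exact Finset.mem_filter.2 ⟨Finset.mem_image.2 ⟨E, hE, rfl⟩,
          Finset.nonempty_iff_ne_empty.2 hq⟩
      · exact (hcompl_int E hE).symm
  · rintro ⟨h' | ⟨q, hq, rfl⟩, hne, hneK⟩
    · rw [restrictR, Finset.mem_filter] at h'
      obtain ⟨h1, _⟩ := h'
      obtain ⟨G, hG, rfl⟩ := Finset.mem_image.1 h1
      exact ⟨⟨G, Finset.mem_union.2 (Or.inl hG), (hint G hG).symm⟩, hne, hneK⟩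
    · rw [restrictR, Finset.mem_filter] at hq
      obtain ⟨h1, _⟩ := hq
      obtain ⟨G, hG, rfl⟩ := Finset.mem_image.1 h1
      refine ⟨⟨Finset.range (n+1) \ G, Finset.mem_union.2 (Or.inr
        (Finset.mem_image.2 ⟨G, hG, rfl⟩)), hcompl_int G hG⟩, hne, hneK⟩

/-! ### Transfer lemmas -/

theorem udis_of_rdis {S T : Multiset (Finset (Finset ℕ))} {x : ℕ} {K : Finset ℕ}
    (hx : x ∉ K)
    (h : RDisentangles (S.map (rootify x)) (T.map (rootify x)) K) :
    UDisentangles S T (insert x K) := by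
  intro he
  apply h
  have e1 : ∀ M : Multiset (Finset (Finset ℕ)),
      (M.map (rootify x)).map (fun C => restrictR C K) =
        (M.map (fun A => restrictU A (insert x K))).map
          (fun Q => Q.filter (fun E => x ∉ E)) := by
    intro M
    rw [Multiset.map_map, Multiset.map_map]
    apply Multiset.map_congr rfl
    intro A _
    simp only [Function.comp_apply]
    exact restrictR_rootify_eq A x K hx
  rw [e1, e1, he]

theorem rdis_of_udis {S T : Multiset (Finset (Finset ℕ))} {n : ℕ} {K : Finset ℕ}
    (hK : K ⊆ Finset.range (n+1))
    (hCS : ∀ C ∈ S, ∀ E ∈ C, n ∉ E) (hCT : ∀ C ∈ T, ∀ E ∈ C, n ∉ E)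
    (h : UDisentangles (S.map (unrootify n)) (T.map (unrootify n)) K) :
    RDisentangles S T (K.erase n) := by
  intro he
  apply h
  have e1 : ∀ M : Multiset (Finset (Finset ℕ)), (∀ C ∈ M, ∀ E ∈ C, n ∉ E) →
      (M.map (unrootify n)).map (fun A => restrictU A K) =
        (M.map (fun C => restrictR C (K.erase n))).map
          (fun Q => ((Q ∪ Q.image (fun q => K \ q)).filter
            (fun B => B.Nonempty ∧ B ≠ K))) := by
    intro M hM
    rw [Multiset.map_map, Multiset.map_map]
    apply Multiset.map_congr rfl
    intro C hC
    simp only [Function.comp_apply]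
    exact restrictU_unrootify_eq C n K hK (hM C hC)
  rw [e1 S hCS, e1 T hCT, he]

/-! ### Full restriction is the identity -/

theorem restrictR_self {X : Finset ℕ} {C : Finset (Finset ℕ)}
    (h : ∀ B ∈ C, B ⊆ X ∧ B.Nonempty) : restrictR C X = C := by
  ext E
  simp only [restrictR, Finset.mem_filter, Finset.mem_image]
  constructor
  · rintro ⟨⟨B, hB, rfl⟩, _⟩
    rwa [Finset.inter_eq_left.2 (h B hB).1]
  · intro hE
    exact ⟨⟨E, hE, Finset.inter_eq_left.2 (h E hE).1⟩, (h E hE).2⟩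

theorem restrictU_self {X : Finset ℕ} {A : Finset (Finset ℕ)}
    (h : ∀ B ∈ A, B ⊆ X ∧ B.Nonempty ∧ (X \ B).Nonempty) : restrictU A X = A := by
  ext E
  simp only [restrictU, Finset.mem_filter, Finset.mem_image]
  constructor
  · rintro ⟨⟨B, hB, rfl⟩, _⟩
    rwa [Finset.inter_eq_left.2 (h B hB).1]
  · intro hE
    refine ⟨⟨E, hE, Finset.inter_eq_left.2 (h E hE).1⟩, (h E hE).2.1, ?_⟩
    intro heq
    obtain ⟨z, hz⟩ := (h E hE).2.2
    rw [Finset.mem_sdiff] at hz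
    exact hz.2 (heq ▸ hz.1)

/-! ### Multiset map injectivity via left inverse -/

theorem map_ne_map {M N : Multiset (Finset (Finset ℕ))}
    (f g : Finset (Finset ℕ) → Finset (Finset ℕ))
    (hM : ∀ a ∈ M, g (f a) = a) (hN : ∀ a ∈ N, g (f a) = a)
    (h : M ≠ N) : M.map f ≠ N.map f := by
  intro he
  apply h
  have e1 : (M.map f).map g = M := by
    rw [Multiset.map_map]
    exact (Multiset.map_congr rfl (fun a ha => hM a ha)).trans (Multiset.map_id M)
  have e2 : (N.map f).map g = N := by
    rw [Multiset.map_map]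
    exact (Multiset.map_congr rfl (fun a ha => hN a ha)).trans (Multiset.map_id N)
  rw [← e1, ← e2, he]


/-! ### The defining sets of `RD` and `D` -/

def Rset (r : ℕ) : Set ℕ :=
  {d | ∃ n : ℕ, ∃ S T : Multiset (Finset (Finset ℕ)),
    Multiset.card S = r ∧ Multiset.card T = r ∧
    (∀ C ∈ S, IsRBT (Finset.range n) C) ∧ (∀ C ∈ T, IsRBT (Finset.range n) C) ∧
    S ≠ T ∧ d = rootedDisentDist (Finset.range n) S T}

def Dset (r : ℕ) : Set ℕ :=
  {d | ∃ n : ℕ, ∃ S T : Multiset (Finset (Finset ℕ)),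
    Multiset.card S = r ∧ Multiset.card T = r ∧
    (∀ A ∈ S, IsUBT (Finset.range n) A) ∧ (∀ A ∈ T, IsUBT (Finset.range n) A) ∧
    S ≠ T ∧ d = disentDist (Finset.range n) S T}

theorem RD_eq (r : ℕ) : RD r = sSup (Rset r) := rfl
theorem D_eq (r : ℕ) : D r = sSup (Dset r) := rfl

theorem sSup_of_not_bddAbove {s : Set ℕ} (h : ¬ BddAbove s) : sSup s = 0 := by
  have h' : ¬ ∃ n, ∀ a ∈ s, a ≤ n := by
    simpa [BddAbove, upperBounds, Set.Nonempty, Set.mem_setOf_eq] using h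
  simp only [sSup, h', dif_neg, not_false_iff]

/-! ### The two key comparison lemmas -/

theorem star {r m : ℕ} {S T : Multiset (Finset (Finset ℕ))}
    (hcS : Multiset.card S = r) (hcT : Multiset.card T = r)
    (hS : ∀ A ∈ S, IsUBT (Finset.range (m+1)) A)
    (hT : ∀ A ∈ T, IsUBT (Finset.range (m+1)) A) (hST : S ≠ T) :
    ∃ d', d' ∈ Rset r ∧ disentDist (Finset.range (m+1)) S T ≤ d' + 1 := by
  have hS' : ∀ C ∈ S.map (rootify m), IsRBT (Finset.range m) C := by
    intro C hC
    obtain ⟨A, hA, rfl⟩ := Multiset.mem_map.1 hC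
    exact isRBT_rootify (hS A hA)
  have hT' : ∀ C ∈ T.map (rootify m), IsRBT (Finset.range m) C := by
    intro C hC
    obtain ⟨A, hA, rfl⟩ := Multiset.mem_map.1 hC
    exact isRBT_rootify (hT A hA)
  have hne : S.map (rootify m) ≠ T.map (rootify m) :=
    map_ne_map (rootify m) (unrootify m)
      (fun A hA => rootify_leftinv (hS A hA)) (fun A hA => rootify_leftinv (hT A hA)) hST
  have hPne : {k | ∃ K ⊆ Finset.range m, K.card = k ∧
      RDisentangles (S.map (rootify m)) (T.map (rootify m)) K}.Nonempty := by
    refine ⟨(Finset.range m).card, Finset.range m, Finset.Subset.refl _, rfl, ?_⟩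
    have e1 : ∀ M : Multiset (Finset (Finset ℕ)),
        (∀ C ∈ M, IsRBT (Finset.range m) C) →
        M.map (fun C => restrictR C (Finset.range m)) = M := by
      intro M hM
      have := Multiset.map_congr (rfl : M = M)
        (fun C hC => restrictR_self (fun B hB => (hM C hC).2.2.1 B hB))
      rw [this]
      exact Multiset.map_id M
    intro he
    rw [e1 _ hS', e1 _ hT'] at he
    exact hne he
  have hmem := Nat.sInf_mem hPne
  obtain ⟨K, hKsub, hKcard, hKdis⟩ := hmem
  refine ⟨rootedDisentDist (Finset.range m) (S.map (rootify m)) (T.map (rootify m)),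
    ⟨m, S.map (rootify m), T.map (rootify m), by rw [Multiset.card_map, hcS],
      by rw [Multiset.card_map, hcT], hS', hT', hne, rfl⟩, ?_⟩
  have hxK : m ∉ K := by
    intro h'
    have := hKsub h'
    simp [Finset.mem_range] at this
  have hud : UDisentangles S T (insert m K) := udis_of_rdis hxK hKdis
  apply Nat.sInf_le
  refine ⟨insert m K, ?_, ?_, hud⟩
  · intro z hz
    rcases Finset.mem_insert.1 hz with rfl | h'
    · simp
    · have := hKsub h'
      rw [Finset.mem_range] at this ⊢
      omega
  · rw [Finset.card_insert_of_notMem hxK, hKcard]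
    rfl

theorem dstar {r n : ℕ} {S T : Multiset (Finset (Finset ℕ))}
    (hcS : Multiset.card S = r) (hcT : Multiset.card T = r)
    (hS : ∀ C ∈ S, IsRBT (Finset.range n) C)
    (hT : ∀ C ∈ T, IsRBT (Finset.range n) C) (hST : S ≠ T) :
    ∃ d, d ∈ Dset r ∧ rootedDisentDist (Finset.range n) S T ≤ d := by
  have hS' : ∀ A ∈ S.map (unrootify n), IsUBT (Finset.range (n+1)) A := by
    intro A hA
    obtain ⟨C, hC, rfl⟩ := Multiset.mem_map.1 hA
    exact isUBT_unrootify (hS C hC)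
  have hT' : ∀ A ∈ T.map (unrootify n), IsUBT (Finset.range (n+1)) A := by
    intro A hA
    obtain ⟨C, hC, rfl⟩ := Multiset.mem_map.1 hA
    exact isUBT_unrootify (hT C hC)
  have hne : S.map (unrootify n) ≠ T.map (unrootify n) :=
    map_ne_map (unrootify n) (rootify n)
      (fun C hC => unrootify_leftinv (hS C hC)) (fun C hC => unrootify_leftinv (hT C hC)) hST
  have hQne : {k | ∃ K ⊆ Finset.range (n+1), K.card = k ∧
      UDisentangles (S.map (unrootify n)) (T.map (unrootify n)) K}.Nonempty := by
    refine ⟨(Finset.range (n+1)).card, Finset.range (n+1), Finset.Subset.refl _, rfl, ?_⟩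
    have e1 : ∀ M : Multiset (Finset (Finset ℕ)),
        (∀ A ∈ M, IsUBT (Finset.range (n+1)) A) →
        M.map (fun A => restrictU A (Finset.range (n+1))) = M := by
      intro M hM
      have := Multiset.map_congr (rfl : M = M)
        (fun A hA => restrictU_self (fun B hB => (hM A hA).1 B hB))
      rw [this]
      exact Multiset.map_id M
    intro he
    rw [e1 _ hS', e1 _ hT'] at he
    exact hne he
  have hmem := Nat.sInf_mem hQne
  obtain ⟨K, hKsub, hKcard, hKdis⟩ := hmem
  have hCS : ∀ C ∈ S, ∀ E ∈ C, n ∉ E := by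
    intro C hC E hE hnE
    have := ((hS C hC).2.2.1 E hE).1 hnE
    simp [Finset.mem_range] at this
  have hCT : ∀ C ∈ T, ∀ E ∈ C, n ∉ E := by
    intro C hC E hE hnE
    have := ((hT C hC).2.2.1 E hE).1 hnE
    simp [Finset.mem_range] at this
  have hrd : RDisentangles S T (K.erase n) := rdis_of_udis hKsub hCS hCT hKdis
  refine ⟨disentDist (Finset.range (n+1)) (S.map (unrootify n)) (T.map (unrootify n)),
    ⟨n+1, S.map (unrootify n), T.map (unrootify n), by rw [Multiset.card_map, hcS],
      by rw [Multiset.card_map, hcT], hS', hT', hne, rfl⟩, ?_⟩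
  have h1 : rootedDisentDist (Finset.range n) S T ≤ (K.erase n).card := by
    apply Nat.sInf_le
    refine ⟨K.erase n, ?_, rfl, hrd⟩
    intro z hz
    rw [Finset.mem_erase] at hz
    have := hKsub hz.2
    rw [Finset.mem_range] at this ⊢
    omega
  have h2 : (K.erase n).card ≤ K.card := Finset.card_le_card (Finset.erase_subset n K)
  have h3 : K.card = disentDist (Finset.range (n+1)) (S.map (unrootify n))
      (T.map (unrootify n)) := hKcard
  calc rootedDisentDist (Finset.range n) S T ≤ (K.erase n).card := h1
    _ ≤ K.card := h2
    _ = _ := h3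

-- MAIN --

/-- The unrooted disentangling number is at most one more than the rooted one:
`D(r) ≤ RD(r) + 1` for all `r`. -/
theorem disentangling_le_rooted_add_one (r : ℕ) : D r ≤ RD r + 1 := by
  rw [D_eq, RD_eq]
  by_cases hne : (Dset r).Nonempty
  · by_cases hbdd : BddAbove (Dset r)
    · have hmem := Nat.sSup_mem hne hbdd
      obtain ⟨n, S, T, hcS, hcT, hS, hT, hST, hd⟩ := hmem
      have hr : r ≠ 0 := by
        rintro rfl
        apply hST
        rw [Multiset.card_eq_zero.1 hcS, Multiset.card_eq_zero.1 hcT]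
      have hn : n ≠ 0 := by
        rintro rfl
        apply hST
        have hz : ∀ (M : Multiset (Finset (Finset ℕ))),
            (∀ A ∈ M, IsUBT (Finset.range 0) A) → ∀ A ∈ M, A = (∅ : Finset (Finset ℕ)) := by
          intro M hM A hA
          rw [Finset.eq_empty_iff_forall_notMem]
          intro B hB
          have h1 := ((hM A hA).1 B hB).1
          have h2 := ((hM A hA).1 B hB).2.1
          obtain ⟨z, hz⟩ := h2
          have := h1 hz
          simp at this
        have e1 : S = Multiset.replicate r ∅ :=
          (Multiset.eq_replicate).2 ⟨hcS, hz S hS⟩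
        have e2 : T = Multiset.replicate r ∅ :=
          (Multiset.eq_replicate).2 ⟨hcT, hz T hT⟩
        rw [e1, e2]
      obtain ⟨m, rfl⟩ : ∃ m, n = m + 1 := ⟨n - 1, by omega⟩
      obtain ⟨d', hd'R, hle⟩ := star hcS hcT hS hT hST
      have hRbdd : BddAbove (Rset r) := by
        refine ⟨sSup (Dset r), fun d'' hd'' => ?_⟩
        obtain ⟨n₂, S₂, T₂, h1, h2, h3, h4, h5, h6⟩ := hd''
        obtain ⟨d₂, hd₂D, hle₂⟩ := dstar h1 h2 h3 h4 h5
        exact le_trans (h6 ▸ hle₂) (le_csSup hbdd hd₂D)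
      calc sSup (Dset r) = disentDist (Finset.range (m+1)) S T := hd
        _ ≤ d' + 1 := hle
        _ ≤ sSup (Rset r) + 1 := by
            have := le_csSup hRbdd hd'R
            omega
    · rw [sSup_of_not_bddAbove hbdd]
      omega
  · rw [Set.not_nonempty_iff_eq_empty.1 hne, csSup_empty]
    exact Nat.zero_le _
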